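/- Let d ≥ 1, σ ∈ (0,1), τ > 0. There is a constant C depending only on d, σ, τ, K, m with the following property: for K > 1 and m ≥ 0, for all measurable f, w : ℝ^d → ℂ with e^{τ⟨·⟩^σ} f ∈ L²(ℝ^d) and ⟨·⟩^m w ∈ L²(ℝ^d), and for every c ∈ (0,1) with exp(τ⟨ξ⟩^σ − τ⟨η⟩^σ) ≤ exp(c·τ⟨ξ−η⟩^σ) holding on the region R₁ = {(ξ,η) : |ξ−η| ≤ |η|/K}, one has ‖ ∫_{{η : |ξ−η| ≤ |η|/K}} e^{τ⟨ξ⟩^σ − τ⟨η⟩^σ} ⟨ξ⟩^m |f(ξ−η)| |w(η)| dη ‖_{L²_ξ} ≤ C · ‖e^{−τ(1−c)⟨·⟩^σ}‖_{L²} · ‖e^{τ⟨·⟩^σ} f‖_{L²} · ‖⟨·⟩^m w‖_{L²}. -/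

import Mathlib

open MeasureTheory Real
open scoped FourierTransform ENNReal

noncomputable section

/-- `ℝ^d` as a Euclidean space. -/
abbrev E (d : ℕ) := EuclideanSpace ℝ (Fin d)

/-- The Japanese bracket `⟨ξ⟩ = (1 + |ξ|²)^{1/2}`. -/
def jap {d : ℕ} (ξ : E d) : ℝ := Real.sqrt (1 + ‖ξ‖ ^ 2)

lemma jap_pos {d : ℕ} (ξ : E d) : 0 < jap ξ := Real.sqrt_pos.mpr (by positivity)

lemma jap_continuous {d : ℕ} : Continuous (jap (d := d)) :=
  Real.continuous_sqrt.comp (by continuity)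

lemma ennreal_half_sq (x : ℝ≥0∞) : (x ^ (1/2 : ℝ)) ^ (2 : ℝ) = x := by
  rw [← ENNReal.rpow_mul]; norm_num

lemma ennreal_sq_half (x : ℝ≥0∞) : (x ^ (2 : ℝ)) ^ (1/2 : ℝ) = x := by
  rw [← ENNReal.rpow_mul]; norm_num

set_option maxHeartbeats 1000000 in
/-- Low-frequency (paraproduct region `R₁ = {|ξ−η| ≤ |η|/K}`)
estimate in the proof of boundedness of the conjugated multiplication operator. -/
theorem stmt_17 (d : ℕ) (hd : 1 ≤ d) (σ τ : ℝ) (hσ0 : 0 < σ) (hσ1 : σ < 1) (hτ : 0 < τ) :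
    ∀ (K m : ℝ), 1 < K → 0 ≤ m →
    ∃ C : ℝ, 0 < C ∧
      ∀ (f w : E d → ℂ), Measurable f → Measurable w →
        MemLp (fun ξ : E d => Real.exp (τ * jap ξ ^ σ) • f ξ) 2 volume →
        MemLp (fun ξ : E d => jap ξ ^ m • w ξ) 2 volume →
        ∀ c : ℝ, c ∈ Set.Ioo (0 : ℝ) 1 →
        (∀ ξ η : E d, ‖ξ - η‖ ≤ ‖η‖ / K →
          Real.exp (τ * jap ξ ^ σ - τ * jap η ^ σ)
            ≤ Real.exp (c * τ * jap (ξ - η) ^ σ)) →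
        eLpNorm (fun ξ : E d =>
            ∫ η in {η : E d | ‖ξ - η‖ ≤ ‖η‖ / K},
              Real.exp (τ * jap ξ ^ σ - τ * jap η ^ σ) * jap ξ ^ m *
                ‖f (ξ - η)‖ * ‖w η‖) 2 volume
          ≤ ENNReal.ofReal C *
              eLpNorm (fun ξ : E d => Real.exp (-τ * (1 - c) * jap ξ ^ σ)) 2 volume *
              eLpNorm (fun ξ : E d => Real.exp (τ * jap ξ ^ σ) • f ξ) 2 volume *
              eLpNorm (fun ξ : E d => jap ξ ^ m • w ξ) 2 volume := by
  intro K m hK hm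
  have hK0 : (0:ℝ) < K := one_pos.trans hK
  have hb0 : (0:ℝ) < 1 + 1/K := by positivity
  have hC₁pos : (0:ℝ) < (1 + 1/K) ^ m := Real.rpow_pos_of_pos hb0 m
  refine ⟨(1 + 1/K) ^ m, hC₁pos, ?_⟩
  intro f w hf hw hfL2 hwL2 c hc hineq
  set C₁ : ℝ := (1 + 1/K) ^ m with hC₁def
  -- continuity / measurability basics
  have hjσc : Continuous fun ξ : E d => jap ξ ^ σ :=
    jap_continuous.rpow_const fun ξ => Or.inl (jap_pos ξ).ne'
  have hjmc : Continuous fun ξ : E d => jap ξ ^ m :=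
    jap_continuous.rpow_const fun ξ => Or.inl (jap_pos ξ).ne'
  -- the main auxiliary ENNReal-valued functions
  set G : E d → ℝ≥0∞ :=
    fun ζ => ENNReal.ofReal (Real.exp (c * τ * jap ζ ^ σ) * ‖f ζ‖) with hGdef
  set H : E d → ℝ≥0∞ := fun η => ENNReal.ofReal (jap η ^ m * ‖w η‖) with hHdef
  set A : E d → ℝ≥0∞ :=
    fun ζ => ENNReal.ofReal (Real.exp (-τ * (1 - c) * jap ζ ^ σ)) with hAdef
  set B : E d → ℝ≥0∞ :=
    fun ζ => ENNReal.ofReal (Real.exp (τ * jap ζ ^ σ) * ‖f ζ‖) with hBdef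
  have hGm : Measurable G :=
    (((Real.continuous_exp.comp (continuous_const.mul hjσc)).measurable).mul
      hf.norm).ennreal_ofReal
  have hHm : Measurable H := ((hjmc.measurable).mul hw.norm).ennreal_ofReal
  have hAm : Measurable A :=
    ((Real.continuous_exp.comp (continuous_const.mul hjσc)).measurable).ennreal_ofReal
  have hBm : Measurable B :=
    (((Real.continuous_exp.comp (continuous_const.mul hjσc)).measurable).mul
      hf.norm).ennreal_ofReal
  have hGfin : ∀ ζ, G ζ ≠ ∞ := fun ζ => ENNReal.ofReal_ne_top
  have hHfin : ∀ ζ, H ζ ≠ ∞ := fun ζ => ENNReal.ofReal_ne_top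
  -- conjugate exponents 2,2
  have h22 : Real.HolderConjugate 2 2 := Real.HolderConjugate.two_two
  -- the basic quantities
  set I : ℝ≥0∞ := ∫⁻ ζ, G ζ with hIdef
  set IH : ℝ≥0∞ := ∫⁻ η, H η ^ (2:ℝ) with hIHdef
  set T : E d → ℝ≥0∞ := fun ξ => ∫⁻ η, G (ξ - η) * H η with hTdef
  set J : E d → ℝ≥0∞ := fun ξ => ∫⁻ η, G (ξ - η) * H η ^ (2:ℝ) with hJdef
  -- translation invariance
  have htransL : ∀ ξ : E d, (∫⁻ η, G (ξ - η)) = I := fun ξ =>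
    (Measure.measurePreserving_sub_left volume ξ).lintegral_comp hGm
  have htransR : ∀ η : E d, (∫⁻ ξ, G (ξ - η)) = I := fun η =>
    lintegral_sub_right_eq_self G η
  have hGsub : ∀ ξ : E d, Measurable fun η : E d => G (ξ - η) := fun ξ =>
    hGm.comp (measurable_const.sub measurable_id)
  -- jap growth on the region
  have hjap_le : ∀ ξ η : E d, ‖ξ - η‖ ≤ ‖η‖ / K → jap ξ ^ m ≤ C₁ * jap η ^ m := by
    intro ξ η hη
    have h1 : ‖ξ‖ ≤ (1 + 1/K) * ‖η‖ := by
      have h0 : ‖ξ‖ ≤ ‖ξ - η‖ + ‖η‖ := by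
        simpa using norm_add_le (ξ - η) η
      have h2 : ‖η‖ / K = (1/K) * ‖η‖ := by ring
      rw [h2] at hη; linarith
    have h2 : jap ξ ≤ (1 + 1/K) * jap η := by
      have hsq : (1 + 1/K) * Real.sqrt (1 + ‖η‖ ^ 2)
          = Real.sqrt ((1 + 1/K) ^ 2 * (1 + ‖η‖ ^ 2)) := by
        rw [Real.sqrt_mul (by positivity), Real.sqrt_sq hb0.le]
      rw [jap, jap, hsq]
      refine Real.sqrt_le_sqrt ?_
      have hx2 : ‖ξ‖ ^ 2 ≤ (1 + 1/K) ^ 2 * ‖η‖ ^ 2 := by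
        rw [← mul_pow]; exact pow_le_pow_left₀ (norm_nonneg ξ) h1 2
      have hb1 : (1:ℝ) ≤ (1 + 1/K) ^ 2 := by nlinarith [one_div_pos.mpr hK0]
      nlinarith [hx2, hb1, sq_nonneg ‖η‖]
    calc jap ξ ^ m ≤ ((1 + 1/K) * jap η) ^ m :=
          Real.rpow_le_rpow (jap_pos ξ).le h2 hm
      _ = C₁ * jap η ^ m := by rw [Real.mul_rpow hb0.le (jap_pos η).le]
  -- measurability of the region
  have hS : ∀ ξ : E d, MeasurableSet {η : E d | ‖ξ - η‖ ≤ ‖η‖ / K} := fun ξ =>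
    (isClosed_le ((continuous_const.sub continuous_id).norm)
      (continuous_norm.div_const K)).measurableSet
  -- Step A : pointwise bound
  have hpt : ∀ ξ : E d,
      (‖∫ η in {η : E d | ‖ξ - η‖ ≤ ‖η‖ / K},
          Real.exp (τ * jap ξ ^ σ - τ * jap η ^ σ) * jap ξ ^ m *
            ‖f (ξ - η)‖ * ‖w η‖‖₊ : ℝ≥0∞)
        ≤ ENNReal.ofReal C₁ * T ξ := by
    intro ξ
    calc (‖∫ η in {η : E d | ‖ξ - η‖ ≤ ‖η‖ / K},
          Real.exp (τ * jap ξ ^ σ - τ * jap η ^ σ) * jap ξ ^ m *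
            ‖f (ξ - η)‖ * ‖w η‖‖₊ : ℝ≥0∞)
        ≤ ∫⁻ η in {η : E d | ‖ξ - η‖ ≤ ‖η‖ / K},
            ‖Real.exp (τ * jap ξ ^ σ - τ * jap η ^ σ) * jap ξ ^ m *
              ‖f (ξ - η)‖ * ‖w η‖‖₊ := enorm_integral_le_lintegral_enorm _
      _ ≤ ∫⁻ η in {η : E d | ‖ξ - η‖ ≤ ‖η‖ / K},
            ENNReal.ofReal C₁ * (G (ξ - η) * H η) := by
          refine setLIntegral_mono' (hS ξ) fun η hη => ?_
          have hjm0 : (0:ℝ) ≤ jap ξ ^ m := Real.rpow_nonneg (jap_pos ξ).le m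
          have hr0 : (0:ℝ) ≤ Real.exp (τ * jap ξ ^ σ - τ * jap η ^ σ) * jap ξ ^ m *
              ‖f (ξ - η)‖ * ‖w η‖ :=
            mul_nonneg (mul_nonneg (mul_nonneg (Real.exp_nonneg _) hjm0)
              (norm_nonneg _)) (norm_nonneg _)
          rw [← enorm_eq_nnnorm, Real.enorm_eq_ofReal hr0]
          have hre : Real.exp (τ * jap ξ ^ σ - τ * jap η ^ σ) * jap ξ ^ m *
              ‖f (ξ - η)‖ * ‖w η‖
              ≤ C₁ * ((Real.exp (c * τ * jap (ξ - η) ^ σ) * ‖f (ξ - η)‖) *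
                  (jap η ^ m * ‖w η‖)) := by
            have h1 := hineq ξ η hη
            have h2 := hjap_le ξ η hη
            calc Real.exp (τ * jap ξ ^ σ - τ * jap η ^ σ) * jap ξ ^ m *
                  ‖f (ξ - η)‖ * ‖w η‖
                ≤ Real.exp (c * τ * jap (ξ - η) ^ σ) * (C₁ * jap η ^ m) *
                  ‖f (ξ - η)‖ * ‖w η‖ := by
                  apply mul_le_mul_of_nonneg_right _ (norm_nonneg _)
                  apply mul_le_mul_of_nonneg_right _ (norm_nonneg _)
                  exact mul_le_mul h1 h2 (Real.rpow_nonneg (jap_pos ξ).le m) (Real.exp_nonneg _)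
              _ = C₁ * ((Real.exp (c * τ * jap (ξ - η) ^ σ) * ‖f (ξ - η)‖) *
                  (jap η ^ m * ‖w η‖)) := by ring
          calc ENNReal.ofReal (Real.exp (τ * jap ξ ^ σ - τ * jap η ^ σ) * jap ξ ^ m *
                ‖f (ξ - η)‖ * ‖w η‖)
              ≤ ENNReal.ofReal (C₁ * ((Real.exp (c * τ * jap (ξ - η) ^ σ) * ‖f (ξ - η)‖) *
                  (jap η ^ m * ‖w η‖))) := ENNReal.ofReal_le_ofReal hre
            _ = ENNReal.ofReal C₁ * (G (ξ - η) * H η) := by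
                rw [ENNReal.ofReal_mul hC₁pos.le, ENNReal.ofReal_mul (by positivity)]
      _ ≤ ∫⁻ η, ENNReal.ofReal C₁ * (G (ξ - η) * H η) := setLIntegral_le_lintegral _ _
      _ = ENNReal.ofReal C₁ * T ξ := lintegral_const_mul' _ _ ENNReal.ofReal_ne_top
  -- Step B : pointwise Cauchy–Schwarz (Young's inequality)
  have hTJ : ∀ ξ : E d, T ξ ≤ I ^ (1/2:ℝ) * J ξ ^ (1/2:ℝ) := by
    intro ξ
    have h1 : T ξ = ∫⁻ η, ((fun η => G (ξ - η) ^ (1/2:ℝ)) *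
        fun η => G (ξ - η) ^ (1/2:ℝ) * H η) η := by
      refine lintegral_congr fun η => ?_
      simp only [Pi.mul_apply]
      rw [← mul_assoc, ← ENNReal.rpow_add_of_nonneg _ _ (by norm_num) (by norm_num)]
      norm_num
    rw [h1]
    calc ∫⁻ η, ((fun η => G (ξ - η) ^ (1/2:ℝ)) *
          fun η => G (ξ - η) ^ (1/2:ℝ) * H η) η
        ≤ (∫⁻ η, (G (ξ - η) ^ (1/2:ℝ)) ^ (2:ℝ)) ^ (1/2:ℝ) *
          (∫⁻ η, (G (ξ - η) ^ (1/2:ℝ) * H η) ^ (2:ℝ)) ^ (1/2:ℝ) :=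
          ENNReal.lintegral_mul_le_Lp_mul_Lq volume h22
            (((hGsub ξ).pow measurable_const).aemeasurable)
            ((((hGsub ξ).pow measurable_const).mul hHm).aemeasurable)
      _ = I ^ (1/2:ℝ) * J ξ ^ (1/2:ℝ) := by
          congr 1
          · congr 1
            rw [← htransL ξ]
            exact lintegral_congr fun η => ennreal_half_sq _
          · congr 1
            refine lintegral_congr fun η => ?_
            rw [ENNReal.mul_rpow_of_nonneg _ _ (by norm_num : (0:ℝ) ≤ 2),
              ennreal_half_sq]
  have hT2 : ∀ ξ : E d, T ξ ^ (2:ℝ) ≤ I * J ξ := by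
    intro ξ
    calc T ξ ^ (2:ℝ) ≤ (I ^ (1/2:ℝ) * J ξ ^ (1/2:ℝ)) ^ (2:ℝ) :=
        ENNReal.rpow_le_rpow (hTJ ξ) (by norm_num)
      _ = I * J ξ := by
        rw [ENNReal.mul_rpow_of_nonneg _ _ (by norm_num : (0:ℝ) ≤ 2),
          ennreal_half_sq, ennreal_half_sq]
  -- Tonelli computation
  have hprod : Measurable fun p : E d × E d => G (p.1 - p.2) * H p.2 ^ (2:ℝ) :=
    (hGm.comp (measurable_fst.sub measurable_snd)).mul
      ((hHm.comp measurable_snd).pow measurable_const)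
  have hJint : (∫⁻ ξ, J ξ) = I * IH := by
    calc (∫⁻ ξ, J ξ) = ∫⁻ η, ∫⁻ ξ, G (ξ - η) * H η ^ (2:ℝ) :=
        lintegral_lintegral_swap hprod.aemeasurable
      _ = ∫⁻ η, I * H η ^ (2:ℝ) := by
          refine lintegral_congr fun η => ?_
          rw [lintegral_mul_const' _ _
            (ENNReal.rpow_ne_top_of_nonneg (by norm_num) (hHfin η)), htransR η,
            mul_comm]
      _ = I * IH := lintegral_const_mul I (hHm.pow measurable_const)
  have hJmeas : Measurable J := hprod.lintegral_prod_right'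
  have hTint : (∫⁻ ξ, T ξ ^ (2:ℝ)) ≤ I * (I * IH) := by
    calc (∫⁻ ξ, T ξ ^ (2:ℝ)) ≤ ∫⁻ ξ, I * J ξ := lintegral_mono hT2
      _ = I * ∫⁻ ξ, J ξ := lintegral_const_mul I hJmeas
      _ = I * (I * IH) := by rw [hJint]
  -- Step C : bound on I
  have hGAB : ∀ ζ : E d, G ζ = A ζ * B ζ := by
    intro ζ
    simp only [hGdef, hAdef, hBdef]
    rw [← ENNReal.ofReal_mul (Real.exp_nonneg _), ← mul_assoc, ← Real.exp_add,
      show -τ * (1 - c) * jap ζ ^ σ + τ * jap ζ ^ σ = c * τ * jap ζ ^ σ by ring]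
  have hN1 : eLpNorm (fun ξ : E d => Real.exp (-τ * (1 - c) * jap ξ ^ σ)) 2 volume
      = (∫⁻ ζ, A ζ ^ (2:ℝ)) ^ (1/2:ℝ) := by
    rw [eLpNorm_eq_lintegral_rpow_enorm_toReal two_ne_zero ENNReal.ofNat_ne_top]
    simp only [ENNReal.toReal_ofNat]
    congr 1
    refine lintegral_congr fun ζ => ?_
    congr 1
    rw [← ofReal_norm, Real.norm_eq_abs, abs_of_pos (Real.exp_pos _)]
  have hN2 : eLpNorm (fun ξ : E d => Real.exp (τ * jap ξ ^ σ) • f ξ) 2 volume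
      = (∫⁻ ζ, B ζ ^ (2:ℝ)) ^ (1/2:ℝ) := by
    rw [eLpNorm_eq_lintegral_rpow_enorm_toReal two_ne_zero ENNReal.ofNat_ne_top]
    simp only [ENNReal.toReal_ofNat]
    congr 1
    refine lintegral_congr fun ζ => ?_
    congr 1
    rw [← ofReal_norm, norm_smul, Real.norm_eq_abs,
      abs_of_pos (Real.exp_pos _)]
  have hN3 : eLpNorm (fun ξ : E d => jap ξ ^ m • w ξ) 2 volume = IH ^ (1/2:ℝ) := by
    rw [eLpNorm_eq_lintegral_rpow_enorm_toReal two_ne_zero ENNReal.ofNat_ne_top]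
    simp only [ENNReal.toReal_ofNat]
    congr 1
    refine lintegral_congr fun ζ => ?_
    congr 1
    rw [← ofReal_norm, norm_smul, Real.norm_eq_abs,
      abs_of_pos (Real.rpow_pos_of_pos (jap_pos ζ) m)]
  have hI_le : I ≤ (∫⁻ ζ, A ζ ^ (2:ℝ)) ^ (1/2:ℝ) * (∫⁻ ζ, B ζ ^ (2:ℝ)) ^ (1/2:ℝ) := by
    calc I = ∫⁻ ζ, (A * B) ζ := by
          refine lintegral_congr fun ζ => ?_
          simpa using hGAB ζ
      _ ≤ (∫⁻ ζ, A ζ ^ (2:ℝ)) ^ (1/2:ℝ) * (∫⁻ ζ, B ζ ^ (2:ℝ)) ^ (1/2:ℝ) :=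
          ENNReal.lintegral_mul_le_Lp_mul_Lq volume h22 hAm.aemeasurable hBm.aemeasurable
  -- Main chain
  have key : eLpNorm (fun ξ : E d =>
      ∫ η in {η : E d | ‖ξ - η‖ ≤ ‖η‖ / K},
        Real.exp (τ * jap ξ ^ σ - τ * jap η ^ σ) * jap ξ ^ m *
          ‖f (ξ - η)‖ * ‖w η‖) 2 volume ≤ ENNReal.ofReal C₁ * I * IH ^ (1/2:ℝ) := by
    rw [eLpNorm_eq_lintegral_rpow_enorm_toReal two_ne_zero ENNReal.ofNat_ne_top]
    simp only [ENNReal.toReal_ofNat]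
    calc (∫⁻ ξ, (‖∫ η in {η : E d | ‖ξ - η‖ ≤ ‖η‖ / K},
          Real.exp (τ * jap ξ ^ σ - τ * jap η ^ σ) * jap ξ ^ m *
            ‖f (ξ - η)‖ * ‖w η‖‖₊ : ℝ≥0∞) ^ (2:ℝ)) ^ (1/2:ℝ)
        ≤ (∫⁻ ξ, (ENNReal.ofReal C₁ * T ξ) ^ (2:ℝ)) ^ (1/2:ℝ) := by
          refine ENNReal.rpow_le_rpow (lintegral_mono fun ξ => ?_) (by norm_num)
          exact ENNReal.rpow_le_rpow (hpt ξ) (by norm_num)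
      _ = ENNReal.ofReal C₁ * (∫⁻ ξ, T ξ ^ (2:ℝ)) ^ (1/2:ℝ) := by
          simp_rw [ENNReal.mul_rpow_of_nonneg _ _ (by norm_num : (0:ℝ) ≤ 2)]
          rw [lintegral_const_mul' _ _
              (ENNReal.rpow_ne_top_of_nonneg (by norm_num) ENNReal.ofReal_ne_top),
            ENNReal.mul_rpow_of_nonneg _ _ (by norm_num : (0:ℝ) ≤ 1/2),
            ennreal_sq_half]
      _ ≤ ENNReal.ofReal C₁ * (I * (I * IH)) ^ (1/2:ℝ) := by
          exact mul_le_mul_right (ENNReal.rpow_le_rpow hTint (by norm_num)) _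
      _ = ENNReal.ofReal C₁ * I * IH ^ (1/2:ℝ) := by
          have h3 : I * (I * IH) = I ^ (2:ℝ) * IH := by
            rw [show ((2:ℝ)) = ((2:ℕ):ℝ) by norm_num, ENNReal.rpow_natCast, pow_two,
              mul_assoc]
          rw [h3, ENNReal.mul_rpow_of_nonneg _ _ (by norm_num : (0:ℝ) ≤ 1/2),
            ennreal_sq_half, mul_assoc]
  calc eLpNorm (fun ξ : E d =>
      ∫ η in {η : E d | ‖ξ - η‖ ≤ ‖η‖ / K},
        Real.exp (τ * jap ξ ^ σ - τ * jap η ^ σ) * jap ξ ^ m *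
          ‖f (ξ - η)‖ * ‖w η‖) 2 volume
      ≤ ENNReal.ofReal C₁ * I * IH ^ (1/2:ℝ) := key
    _ ≤ ENNReal.ofReal C₁ *
        ((∫⁻ ζ, A ζ ^ (2:ℝ)) ^ (1/2:ℝ) * (∫⁻ ζ, B ζ ^ (2:ℝ)) ^ (1/2:ℝ)) *
        IH ^ (1/2:ℝ) := by
        exact mul_le_mul_left (mul_le_mul_right hI_le _) _
    _ = ENNReal.ofReal C₁ *
        eLpNorm (fun ξ : E d => Real.exp (-τ * (1 - c) * jap ξ ^ σ)) 2 volume *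
        eLpNorm (fun ξ : E d => Real.exp (τ * jap ξ ^ σ) • f ξ) 2 volume *
        eLpNorm (fun ξ : E d => jap ξ ^ m • w ξ) 2 volume := by
        rw [hN1, hN2, hN3]; ring
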